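/- For any probability distribution p on ℤ₊ with finite nonzero mean λ satisfying λ > 2p(2), ζ_CM(p) ≤ 1 − p(0) − p(1)a − p(2)a², where a = p(1)/(λ − 2p(2)). -/
import Mathlib


/-- Probability generating function `G_p(s) = ∑ p(k) s^k`. -/
noncomputable def pgf (p : ℕ → ℝ) (s : ℝ) : ℝ := ∑' k : ℕ, p k * s ^ k

/-- Mean `m₁(p) = ∑ k p(k)`. -/
noncomputable def meanNat (p : ℕ → ℝ) : ℝ := ∑' k : ℕ, (k : ℝ) * p k

/-- Downshifted size biasing `p∘(k) = (k+1) p(k+1) / m₁(p)`. -/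
noncomputable def downshift (p : ℕ → ℝ) : ℕ → ℝ :=
  fun k => ((k : ℝ) + 1) * p (k + 1) / meanNat p

/-- Extinction probability: the smallest fixed point of `G_p` in `[0,1]`. -/
noncomputable def eta (p : ℕ → ℝ) : ℝ :=
  sInf {s : ℝ | s ∈ Set.Icc (0 : ℝ) 1 ∧ pgf p s = s}

/-- Configuration model branching functional `ζ_CM(p) = 1 - G_p(η(p∘))`. -/
noncomputable def zetaCM (p : ℕ → ℝ) : ℝ := 1 - pgf p (eta (downshift p))

/-- For any probability distribution `p` on ℤ₊ with finite nonzero mean `λ > 2p(2)`,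
`ζ_CM(p) ≤ 1 - p(0) - p(1)a - p(2)a²` where `a = p(1)/(λ - 2p(2))`. -/
theorem zetaCM_crude_upper3 (p : ℕ → ℝ) (hnn : ∀ k, 0 ≤ p k) (hsum : HasSum p 1)
    (hmom : Summable (fun k : ℕ => (k : ℝ) * p k)) (hmean : meanNat p ≠ 0)
    (hgt : 2 * p 2 < meanNat p) :
    zetaCM p ≤ 1 - p 0 - p 1 * (p 1 / (meanNat p - 2 * p 2))
      - p 2 * (p 1 / (meanNat p - 2 * p 2)) ^ 2 := by
  set l := meanNat p with hl
  have hl0 : 0 < l := lt_of_le_of_lt (by have := hnn 2; linarith) hgt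
  have hden : 0 < l - 2 * p 2 := by linarith
  set a := p 1 / (l - 2 * p 2) with ha
  have ha0 : 0 ≤ a := div_nonneg (hnn 1) hden.le
  -- summability of shifted sequence
  have hshift : Summable (fun k : ℕ => ((k : ℝ) + 1) * p (k + 1)) := by
    have h := (summable_nat_add_iff 1).mpr hmom
    apply h.congr
    intro k
    push_cast
    ring
  have hq : ∀ k, 0 ≤ downshift p k := by
    intro k
    exact div_nonneg (mul_nonneg (by positivity) (hnn (k + 1))) hl0.le
  have hqsumm : Summable (downshift p) := hshift.div_const l
  have hshiftsum : ∑' k : ℕ, ((k : ℝ) + 1) * p (k + 1) = l := by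
    have h0 := Summable.tsum_eq_zero_add hmom
    rw [hl, meanNat, h0]
    push_cast
    simp
  have hqsum : ∑' k, downshift p k = 1 := by
    unfold downshift
    rw [← hl, tsum_div_const, hshiftsum, div_self hl0.ne']
  -- 1 is a fixed point of pgf (downshift p)
  have h1mem : (1 : ℝ) ∈ {s : ℝ | s ∈ Set.Icc (0 : ℝ) 1 ∧ pgf (downshift p) s = s} := by
    constructor
    · exact ⟨zero_le_one, le_refl 1⟩
    · simp [pgf, hqsum]
  have hbdd : BddBelow {s : ℝ | s ∈ Set.Icc (0 : ℝ) 1 ∧ pgf (downshift p) s = s} :=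
    ⟨0, fun s hs => hs.1.1⟩
  have hne : {s : ℝ | s ∈ Set.Icc (0 : ℝ) 1 ∧ pgf (downshift p) s = s}.Nonempty := ⟨1, h1mem⟩
  -- every fixed point s in [0,1] satisfies a ≤ s
  have hkey : ∀ s ∈ {s : ℝ | s ∈ Set.Icc (0 : ℝ) 1 ∧ pgf (downshift p) s = s}, a ≤ s := by
    rintro s ⟨⟨hs0, hs1⟩, hfix⟩
    have hsummable : Summable (fun k => downshift p k * s ^ k) := by
      apply Summable.of_nonneg_of_le (fun k => mul_nonneg (hq k) (pow_nonneg hs0 k))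
        (fun k => ?_) hqsumm
      calc downshift p k * s ^ k ≤ downshift p k * 1 :=
            mul_le_mul_of_nonneg_left (pow_le_one₀ hs0 hs1) (hq k)
        _ = downshift p k := mul_one _
    have hpartial : (∑ k ∈ Finset.range 2, downshift p k * s ^ k) ≤ s := by
      have h := Summable.sum_le_tsum (Finset.range 2)
        (fun k _ => mul_nonneg (hq k) (pow_nonneg hs0 k)) hsummable
      rwa [show (∑' k, downshift p k * s ^ k) = pgf (downshift p) s from rfl, hfix] at h
    have hq0 : downshift p 0 = p 1 / l := by simp [downshift, hl]
    have hq1 : downshift p 1 = 2 * p 2 / l := by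
      simp [downshift, hl]; ring
    rw [Finset.sum_range_succ, Finset.sum_range_one, hq0, hq1] at hpartial
    simp only [pow_zero, mul_one, pow_one] at hpartial
    -- p 1 / l + (2 * p 2 / l) * s ≤ s
    rw [ha, div_le_iff₀ hden]
    have : p 1 + 2 * p 2 * s ≤ s * l := by
      have h := mul_le_mul_of_nonneg_right hpartial hl0.le
      field_simp at h
      linarith [h]
    nlinarith
  have haeta : a ≤ eta (downshift p) := le_csInf hne hkey
  have heta0 : 0 ≤ eta (downshift p) := le_csInf hne (fun s hs => hs.1.1)
  have heta1 : eta (downshift p) ≤ 1 := csInf_le hbdd h1mem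
  set e := eta (downshift p) with he
  -- lower bound pgf p e by its first three terms
  have hsummable2 : Summable (fun k => p k * e ^ k) := by
    apply Summable.of_nonneg_of_le (fun k => mul_nonneg (hnn k) (pow_nonneg heta0 k))
      (fun k => ?_) hsum.summable
    calc p k * e ^ k ≤ p k * 1 :=
          mul_le_mul_of_nonneg_left (pow_le_one₀ heta0 heta1) (hnn k)
      _ = p k := mul_one _
  have hpartial2 : (∑ k ∈ Finset.range 3, p k * e ^ k) ≤ pgf p e :=
    Summable.sum_le_tsum _ (fun k _ => mul_nonneg (hnn k) (pow_nonneg heta0 k)) hsummable2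
  have hsum3 : (∑ k ∈ Finset.range 3, p k * e ^ k) = p 0 + p 1 * e + p 2 * e ^ 2 := by
    simp [Finset.sum_range_succ]
  rw [hsum3] at hpartial2
  have h1 : p 1 * a ≤ p 1 * e := mul_le_mul_of_nonneg_left haeta (hnn 1)
  have h2 : p 2 * a ^ 2 ≤ p 2 * e ^ 2 :=
    mul_le_mul_of_nonneg_left (pow_le_pow_left₀ ha0 haeta 2) (hnn 2)
  unfold zetaCM
  rw [← he]
  linarith
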